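/- Let n ≥ 4 and 1 ≤ d ≤ n−3. Then π̃_* ∘ π̃* = 0, and if x ∈ ℚSP_{d+1,n+1} satisfies π̃_*(x) ∈ R_{d+1,n}, then x ∈ π̃*(ℚSP_{d,n}) + R_{d+1,n+1}. Equivalently, the induced sequence of quotient spaces ℚSP_{d,n}/R_{d,n} →^{π^*} ℚSP_{d+1,n+1}/R_{d+1,n+1} →^{π_*} ℚSP_{d+1,n}/R_{d+1,n} is exact at the middle term. -/

import Mathlib

/-! Common definitions: free ℚ-vector spaces on finite sets of subsets/partitions of
`[n] = {1,…,n}`, the pairing ⟨Π,T⟩, the maps φ̃, α, β, π̃*, π̃_*, odd, even, γ,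
and the relation subspace `R_{d,n}`. -/

/-- `B` is a set partition of `[n] = {1,…,n}`: the parts are nonempty, pairwise
disjoint, and their union is `{1,…,n}`. -/
def IsPartition (n : ℕ) (B : Finset (Finset ℕ)) : Prop :=
  (∀ P ∈ B, P.Nonempty) ∧ (∀ P ∈ B, ∀ Q ∈ B, P ≠ Q → P ∩ Q = ∅) ∧
    B.sup id = Finset.Icc 1 n

instance (n : ℕ) (B : Finset (Finset ℕ)) : Decidable (IsPartition n B) := by
  unfold IsPartition; infer_instance

/-- `SP_{d,n}`: the set of set partitions of `[n]` into exactly `d+3` nonempty parts. -/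
def SPf (d : ℤ) (n : ℕ) : Finset (Finset (Finset ℕ)) :=
  ((Finset.Icc 1 n).powerset.powerset).filter
    (fun B => IsPartition n B ∧ (B.card : ℤ) = d + 3)

/-- `K^d_n = {T ⊆ [n] : |T| ≥ d+3, |T| ≡ d+3 (mod 2)}`. -/
def Kf (d : ℤ) (n : ℕ) : Finset (Finset ℕ) :=
  (Finset.Icc 1 n).powerset.filter
    (fun T => d + 3 ≤ (T.card : ℤ) ∧ (T.card : ℤ) % 2 = (d + 3) % 2)

/-- The basis vector of the free vector space `ℚS = (↥S → ℚ)` corresponding to `a`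
(the zero vector if `a ∉ S`). -/
def bvec {A : Type*} [DecidableEq A] (S : Finset A) (a : A) : ↥S → ℚ :=
  fun x => if x.val = a then 1 else 0

/-- The pairing `⟨B,T⟩`: `1` if `T` meets every part of `B`, else `0`. -/
def pairPT (B : Finset (Finset ℕ)) (T : Finset ℕ) : ℚ :=
  if ∀ P ∈ B, (P ∩ T).Nonempty then 1 else 0

/-- The linear map `φ̃_{d,n} : ℚSP_{d,n} → ℚK^d_n`, `Π ↦ Σ_{T ∈ K^d_n} ⟨Π,T⟩·T`. -/
noncomputable def phiT (d : ℤ) (n : ℕ) : (↥(SPf d n) → ℚ) →ₗ[ℚ] (↥(Kf d n) → ℚ) :=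
  Matrix.mulVecLin (Matrix.of fun T B => pairPT B.val T.val)

/-- Generic "insert `n+1`" map between free vector spaces on finite families of
subsets of `ℕ`: sends the basis vector of `T` to the basis vector of `T ∪ {n+1}`. -/
noncomputable def insMap (n : ℕ) (S S' : Finset (Finset ℕ)) :
    (↥S → ℚ) →ₗ[ℚ] (↥S' → ℚ) :=
  Matrix.mulVecLin (Matrix.of fun T' T =>
    if T'.val = insert (n+1) T.val then (1 : ℚ) else 0)

/-- Generic "forget `n+1`" map: sends the basis vector of `T` to itself if
`n+1 ∉ T` and to `0` otherwise. -/
noncomputable def resMap (n : ℕ) (S S' : Finset (Finset ℕ)) :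
    (↥S → ℚ) →ₗ[ℚ] (↥S' → ℚ) :=
  Matrix.mulVecLin (Matrix.of fun T' T =>
    if T.val = T'.val ∧ n+1 ∉ T.val then (1 : ℚ) else 0)

/-- `α : ℚK^d_n → ℚK^{d+1}_{n+1}`, `T ↦ T ∪ {n+1}`. -/
noncomputable def alphaK (d : ℤ) (n : ℕ) : (↥(Kf d n) → ℚ) →ₗ[ℚ] (↥(Kf (d+1) (n+1)) → ℚ) :=
  insMap n (Kf d n) (Kf (d+1) (n+1))

/-- `β : ℚK^d_{n+1} → ℚK^d_n`, `T ↦ T` if `n+1 ∉ T`, else `T ↦ 0`. -/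
noncomputable def betaK (d : ℤ) (n : ℕ) : (↥(Kf d (n+1)) → ℚ) →ₗ[ℚ] (↥(Kf d n) → ℚ) :=
  resMap n (Kf d (n+1)) (Kf d n)

/-- `π̃^* : ℚSP_{d,n} → ℚSP_{d+1,n+1}`, `Π ↦ Π ∪ {{n+1}}`. -/
noncomputable def piUp (d : ℤ) (n : ℕ) :
    (↥(SPf d n) → ℚ) →ₗ[ℚ] (↥(SPf (d+1) (n+1)) → ℚ) :=
  Matrix.mulVecLin (Matrix.of fun B' B =>
    if B'.val = insert {n+1} B.val then (1 : ℚ) else 0)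

/-- `π̃_* : ℚSP_{d,n+1} → ℚSP_{d,n}`: a partition `Π` of `[n+1]` goes to `0` if
`{n+1}` is a part of `Π`, and otherwise to `{P \ {n+1} : P ∈ Π}`. -/
noncomputable def piDown (d : ℤ) (n : ℕ) :
    (↥(SPf d (n+1)) → ℚ) →ₗ[ℚ] (↥(SPf d n) → ℚ) :=
  Matrix.mulVecLin (Matrix.of fun B' B =>
    if ({n+1} : Finset ℕ) ∉ B.val ∧
        B'.val = B.val.image (fun P => P.erase (n+1)) then (1 : ℚ) else 0)

/-- The subspace `R_{d,n} ⊆ ℚSP_{d,n}` spanned by the Keel/Kontsevich–Manin type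
relations: for every partition `S` of `[n]` with `d+4` parts and distinct parts
`P₁,P₂,P₃,P₄ ∈ S`, the element
`{P₁∪P₂,…} + {P₃∪P₄,…} − {P₁∪P₃,…} − {P₂∪P₄,…}`. -/
noncomputable def Rsub (d : ℤ) (n : ℕ) : Submodule ℚ (↥(SPf d n) → ℚ) :=
  Submodule.span ℚ { v | ∃ S : Finset (Finset ℕ), ∃ P1 P2 P3 P4 : Finset ℕ,
    IsPartition n S ∧ (S.card : ℤ) = d + 4 ∧
    P1 ∈ S ∧ P2 ∈ S ∧ P3 ∈ S ∧ P4 ∈ S ∧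
    P1 ≠ P2 ∧ P1 ≠ P3 ∧ P1 ≠ P4 ∧ P2 ≠ P3 ∧ P2 ≠ P4 ∧ P3 ≠ P4 ∧
    v = bvec (SPf d n) (insert (P1 ∪ P2) ((S.erase P1).erase P2))
      + bvec (SPf d n) (insert (P3 ∪ P4) ((S.erase P3).erase P4))
      - bvec (SPf d n) (insert (P1 ∪ P3) ((S.erase P1).erase P3))
      - bvec (SPf d n) (insert (P2 ∪ P4) ((S.erase P2).erase P4)) }

/-- `F_n = {(P₁,P₂) : P₁ ∪ P₂ = [n], P₁ ∩ P₂ = ∅, 1 ∈ P₁}`. -/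
def Fset (n : ℕ) : Finset (Finset ℕ × Finset ℕ) :=
  ((Finset.Icc 1 n).powerset ×ˢ (Finset.Icc 1 n).powerset).filter
    (fun p => p.1 ∪ p.2 = Finset.Icc 1 n ∧ p.1 ∩ p.2 = ∅ ∧ 1 ∈ p.1)

/-- `E_n`: subsets of `[n]` of even cardinality. -/
def Eset (n : ℕ) : Finset (Finset ℕ) :=
  (Finset.Icc 1 n).powerset.filter (fun T => T.card % 2 = 0)

/-- `O_n`: subsets of `[n]` of odd cardinality. -/
def Oset (n : ℕ) : Finset (Finset ℕ) :=
  (Finset.Icc 1 n).powerset.filter (fun T => T.card % 2 = 1)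

/-- `odd_n : ℚF_n → ℚO_n`, `(P₁,P₂) ↦ −Σ_{T⊆P₁, |T| odd} T + Σ_{T⊆P₂, |T| odd} T`. -/
noncomputable def oddMap (n : ℕ) : (↥(Fset n) → ℚ) →ₗ[ℚ] (↥(Oset n) → ℚ) :=
  Matrix.mulVecLin (Matrix.of fun T p =>
    (if T.val ⊆ p.val.1 then (-1 : ℚ) else 0) + (if T.val ⊆ p.val.2 then (1 : ℚ) else 0))

/-- `even_n : ℚF_n → ℚE_n`, `(P₁,P₂) ↦ −Σ_{T⊆P₁, |T| even} T − Σ_{T⊆P₂, |T| even} T`. -/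
noncomputable def evenMap (n : ℕ) : (↥(Fset n) → ℚ) →ₗ[ℚ] (↥(Eset n) → ℚ) :=
  Matrix.mulVecLin (Matrix.of fun T p =>
    (if T.val ⊆ p.val.1 then (-1 : ℚ) else 0) + (if T.val ⊆ p.val.2 then (-1 : ℚ) else 0))

/-- `γ : ℚF_n → ℚF_{n+1}`, `(P₁,P₂) ↦ (P₁∪{n+1},P₂) − (P₁,P₂∪{n+1})`. -/
noncomputable def gammaMap (n : ℕ) : (↥(Fset n) → ℚ) →ₗ[ℚ] (↥(Fset (n+1)) → ℚ) :=
  Matrix.mulVecLin (Matrix.of fun q p =>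
    (if q.val = (insert (n+1) p.val.1, p.val.2) then (1 : ℚ) else 0)
    - (if q.val = (p.val.1, insert (n+1) p.val.2) then (1 : ℚ) else 0))

/-- `π̃'_* : ℚF_{n+1} → ℚF_n`, `(P₁,P₂) ↦ (P₁∖{n+1}, P₂∖{n+1})`. -/
noncomputable def piDownF (n : ℕ) : (↥(Fset (n+1)) → ℚ) →ₗ[ℚ] (↥(Fset n) → ℚ) :=
  Matrix.mulVecLin (Matrix.of fun q p =>
    if q.val = (p.val.1.erase (n+1), p.val.2.erase (n+1)) then (1 : ℚ) else 0)

section Aux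
open Finset

/-- Merge two parts of a partition. -/
def pmerge (S : Finset (Finset ℕ)) (A B : Finset ℕ) : Finset (Finset ℕ) :=
  insert (A ∪ B) ((S.erase A).erase B)

/-- Add element `m` to part `Q`. -/
def papp (m : ℕ) (S : Finset (Finset ℕ)) (Q : Finset ℕ) : Finset (Finset ℕ) :=
  insert (insert m Q) (S.erase Q)

/-- The part containing 1 (under disjointness hypotheses). -/
def part1 (S : Finset (Finset ℕ)) : Finset ℕ := (S.filter (fun P => 1 ∈ P)).sup id

lemma part_subset {n : ℕ} {S : Finset (Finset ℕ)} (h : IsPartition n S)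
    {P : Finset ℕ} (hP : P ∈ S) : P ⊆ Finset.Icc 1 n := by
  have := Finset.le_sup (f := id) hP
  rw [h.2.2] at this; exact this

lemma part_not_mem_top {n : ℕ} {S : Finset (Finset ℕ)} (h : IsPartition n S)
    {P : Finset ℕ} (hP : P ∈ S) : n + 1 ∉ P := by
  intro hc
  have := part_subset h hP hc
  simp [Finset.mem_Icc] at this

lemma part1_eq {S : Finset (Finset ℕ)}
    (hd : ∀ P ∈ S, ∀ Q ∈ S, P ≠ Q → P ∩ Q = ∅)
    {Q : Finset ℕ} (hQ : Q ∈ S) (h1 : 1 ∈ Q) : part1 S = Q := by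
  have hf : S.filter (fun P => 1 ∈ P) = {Q} := by
    ext P
    simp only [Finset.mem_filter, Finset.mem_singleton]
    constructor
    · rintro ⟨hP, h1P⟩
      by_contra hne
      have := hd P hP Q hQ hne
      have : (1 : ℕ) ∈ P ∩ Q := Finset.mem_inter.mpr ⟨h1P, h1⟩
      simp_all
    · rintro rfl; exact ⟨hQ, h1⟩
  rw [part1, hf, Finset.sup_singleton, id]

lemma exists_part_one {n : ℕ} {S : Finset (Finset ℕ)} (h : IsPartition n S)
    (hn : 1 ≤ n) : ∃ Q ∈ S, 1 ∈ Q := by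
  have : (1 : ℕ) ∈ S.sup id := by rw [h.2.2]; simp [Finset.mem_Icc]; omega
  simpa using Finset.mem_sup.mp this

lemma exists_part_mem {n : ℕ} {S : Finset (Finset ℕ)} (h : IsPartition n S)
    {a : ℕ} (ha : a ∈ Finset.Icc 1 n) : ∃ Q ∈ S, a ∈ Q := by
  have : a ∈ S.sup id := by rw [h.2.2]; exact ha
  simpa using Finset.mem_sup.mp this

/-- A merged part is never equal to another remaining part. -/
lemma union_ne_part {n : ℕ} {S : Finset (Finset ℕ)} (h : IsPartition n S)
    {A B P : Finset ℕ} (hA : A ∈ S) (hP : P ∈ S) (hPA : P ≠ A) : A ∪ B ≠ P := by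
  intro hc
  obtain ⟨a, haA⟩ := h.1 A hA
  have : a ∈ P ∩ A := Finset.mem_inter.mpr ⟨hc ▸ (Finset.mem_union_left _ haA), haA⟩
  rw [h.2.1 P hP A hA hPA] at this
  simp at this

lemma union_not_mem_erase {n : ℕ} {S : Finset (Finset ℕ)} (h : IsPartition n S)
    {A B : Finset ℕ} (hA : A ∈ S) : A ∪ B ∉ (S.erase A).erase B := by
  intro hc
  have hPmem := Finset.mem_of_mem_erase (Finset.mem_of_mem_erase hc)
  have hPA : A ∪ B ≠ A := Finset.ne_of_mem_erase (Finset.mem_of_mem_erase hc)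
  exact union_ne_part h hA hPmem hPA rfl

end Aux
section Aux2
open Finset

lemma S_decomp2 {S : Finset (Finset ℕ)} {A B : Finset ℕ}
    (hA : A ∈ S) (hB : B ∈ S) (hAB : A ≠ B) :
    S = insert A (insert B ((S.erase A).erase B)) := by
  rw [Finset.insert_erase (Finset.mem_erase.mpr ⟨fun h => hAB h.symm, hB⟩),
    Finset.insert_erase hA]

lemma pmerge_isPartition {n : ℕ} {S : Finset (Finset ℕ)} (h : IsPartition n S)
    {A B : Finset ℕ} (hA : A ∈ S) (hB : B ∈ S) (hAB : A ≠ B) :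
    IsPartition n (pmerge S A B) := by
  obtain ⟨hne, hdisj, hsup⟩ := h
  refine ⟨?_, ?_, ?_⟩
  · intro P hP
    rcases Finset.mem_insert.mp hP with rfl | hP
    · obtain ⟨a, ha⟩ := hne A hA; exact ⟨a, Finset.mem_union_left _ ha⟩
    · exact hne P (Finset.mem_of_mem_erase (Finset.mem_of_mem_erase hP))
  · intro P hP Q hQ hPQ
    rcases Finset.mem_insert.mp hP with rfl | hP <;>
      rcases Finset.mem_insert.mp hQ with rfl | hQ
    · exact absurd rfl hPQ
    · have hQ' := Finset.mem_of_mem_erase (Finset.mem_of_mem_erase hQ)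
      have h1 : A ∩ Q = ∅ := hdisj A hA Q hQ'
        (fun hh => (Finset.ne_of_mem_erase (Finset.mem_of_mem_erase hQ)) hh.symm)
      have h2 : B ∩ Q = ∅ := hdisj B hB Q hQ'
        (fun hh => (Finset.ne_of_mem_erase hQ) hh.symm)
      rw [Finset.union_inter_distrib_right, h1, h2, Finset.union_empty]
    · have hP' := Finset.mem_of_mem_erase (Finset.mem_of_mem_erase hP)
      have h1 : P ∩ A = ∅ := hdisj P hP' A hA
        (Finset.ne_of_mem_erase (Finset.mem_of_mem_erase hP))
      have h2 : P ∩ B = ∅ := hdisj P hP' B hB (Finset.ne_of_mem_erase hP)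
      rw [Finset.inter_union_distrib_left, h1, h2, Finset.union_empty]
    · exact hdisj P (Finset.mem_of_mem_erase (Finset.mem_of_mem_erase hP))
        Q (Finset.mem_of_mem_erase (Finset.mem_of_mem_erase hQ)) hPQ
  · have hS := S_decomp2 hA hB hAB
    have : S.sup id = (pmerge S A B).sup id := by
      conv_lhs => rw [hS]
      rw [pmerge, Finset.sup_insert, Finset.sup_insert, Finset.sup_insert]
      simp only [id]
      rw [← sup_assoc]; simp only [Finset.sup_eq_union]
    rw [← this, hsup]

lemma pmerge_card {n : ℕ} {S : Finset (Finset ℕ)} (h : IsPartition n S)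
    {A B : Finset ℕ} (hA : A ∈ S) (hB : B ∈ S) (hAB : A ≠ B) :
    (pmerge S A B).card + 1 = S.card := by
  rw [pmerge, Finset.card_insert_of_notMem (union_not_mem_erase h hA),
    Finset.card_erase_of_mem (Finset.mem_erase.mpr ⟨fun hh => hAB hh.symm, hB⟩),
    Finset.card_erase_of_mem hA]
  have h2 : 2 ≤ S.card := Finset.one_lt_card.mpr ⟨A, hA, B, hB, hAB⟩
  omega

lemma insert_top_not_mem {n : ℕ} {S : Finset (Finset ℕ)} (h : IsPartition n S)
    {Q : Finset ℕ} {T : Finset (Finset ℕ)} (hT : T ⊆ S) : insert (n+1) Q ∉ T := by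
  intro hc
  exact part_not_mem_top h (hT hc) (Finset.mem_insert_self _ _)

lemma Icc_succ (n : ℕ) : Finset.Icc 1 (n+1) = insert (n+1) (Finset.Icc 1 n) := by
  ext a; simp [Finset.mem_Icc, Finset.mem_insert]; omega

lemma papp_isPartition {n : ℕ} {S : Finset (Finset ℕ)} (h : IsPartition n S)
    {Q : Finset ℕ} (hQ : Q ∈ S) : IsPartition (n+1) (papp (n+1) S Q) := by
  obtain ⟨hne, hdisj, hsup⟩ := h
  refine ⟨?_, ?_, ?_⟩
  · intro P hP
    rcases Finset.mem_insert.mp hP with rfl | hP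
    · exact ⟨n+1, Finset.mem_insert_self _ _⟩
    · exact hne P (Finset.mem_of_mem_erase hP)
  · intro P hP Q' hQ' hPQ
    have htop : ∀ R ∈ S, n+1 ∉ R := fun R hR => part_not_mem_top ⟨hne, hdisj, hsup⟩ hR
    rcases Finset.mem_insert.mp hP with rfl | hP <;>
      rcases Finset.mem_insert.mp hQ' with rfl | hQ'
    · exact absurd rfl hPQ
    · rw [Finset.insert_inter_of_notMem (htop Q' (Finset.mem_of_mem_erase hQ'))]
      exact hdisj Q hQ Q' (Finset.mem_of_mem_erase hQ')
        (fun hh => (Finset.ne_of_mem_erase hQ') hh.symm)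
    · rw [Finset.inter_comm, Finset.insert_inter_of_notMem
        (htop P (Finset.mem_of_mem_erase hP)), Finset.inter_comm]
      exact hdisj P (Finset.mem_of_mem_erase hP) Q hQ (Finset.ne_of_mem_erase hP)
    · exact hdisj P (Finset.mem_of_mem_erase hP) Q' (Finset.mem_of_mem_erase hQ') hPQ
  · have hS : S = insert Q (S.erase Q) := (Finset.insert_erase hQ).symm
    rw [papp, Finset.sup_insert]
    have : ((S.erase Q).sup id : Finset ℕ) ⊔ Q = S.sup id := by
      conv_rhs => rw [hS]
      rw [Finset.sup_insert]; simp only [id]; rw [sup_comm]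
    have h2 : (id (insert (n+1) Q) : Finset ℕ) ⊔ (S.erase Q).sup id
        = insert (n+1) (Q ⊔ (S.erase Q).sup id) := by
      simp only [id, Finset.sup_eq_union]
      rw [Finset.insert_union]
    rw [h2, Icc_succ, sup_comm Q _, this, hsup]

lemma papp_card {S : Finset (Finset ℕ)} {n : ℕ} (h : IsPartition n S)
    {Q : Finset ℕ} (hQ : Q ∈ S) : (papp (n+1) S Q).card = S.card := by
  rw [papp, Finset.card_insert_of_notMem
    (insert_top_not_mem h (Finset.erase_subset _ _)),
    Finset.card_erase_of_mem hQ]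
  have : 1 ≤ S.card := Finset.card_pos.mpr ⟨Q, hQ⟩
  omega

end Aux2
section Aux3
open Finset

lemma mem_SPf {d : ℤ} {n : ℕ} {B : Finset (Finset ℕ)}
    (h1 : IsPartition n B) (h2 : (B.card : ℤ) = d + 3) : B ∈ SPf d n := by
  rw [SPf, Finset.mem_filter, Finset.mem_powerset]
  exact ⟨fun P hP => Finset.mem_powerset.mpr (part_subset h1 hP), h1, h2⟩

lemma SPf_spec {d : ℤ} {n : ℕ} {B : Finset (Finset ℕ)} (h : B ∈ SPf d n) :
    IsPartition n B ∧ (B.card : ℤ) = d + 3 := (Finset.mem_filter.mp h).2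

lemma ferase_comm {α : Type*} [DecidableEq α] (s : Finset α) (a b : α) :
    (s.erase a).erase b = (s.erase b).erase a := by
  ext x; simp only [Finset.mem_erase]; tauto

lemma pmerge_comm (S : Finset (Finset ℕ)) (A B : Finset ℕ) :
    pmerge S A B = pmerge S B A := by
  rw [pmerge, pmerge, Finset.union_comm, ferase_comm]

/-- L1: adding `m` to a part `Q` untouched by a merge commutes with the merge. -/
lemma papp_pmerge {n : ℕ} {S : Finset (Finset ℕ)} (h : IsPartition n S)
    {A B Q : Finset ℕ} (hA : A ∈ S) (hB : B ∈ S) (hQ : Q ∈ S)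
    (hQA : Q ≠ A) (hQB : Q ≠ B) (m : ℕ) (hm : ∀ P ∈ S, m ∉ P) :
    papp m (pmerge S A B) Q = pmerge (papp m S Q) A B := by
  have hQne : Q ≠ A ∪ B := fun hh => (union_ne_part h hA hQ hQA) hh.symm
  have hmA : A ≠ insert m Q := fun hh => hm A hA (hh ▸ Finset.mem_insert_self m Q)
  have hmB : B ≠ insert m Q := fun hh => hm B hB (hh ▸ Finset.mem_insert_self m Q)
  rw [papp, pmerge, Finset.erase_insert_of_ne (fun hh => hQne hh.symm)]
  rw [pmerge, papp, Finset.erase_insert_of_ne hmA.symm, Finset.erase_insert_of_ne hmB.symm]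
  rw [Finset.insert_comm]
  congr 2
  rw [ferase_comm (S.erase A) B Q, ferase_comm S A Q]

/-- L2: adding `m` to the merged part. -/
lemma papp_pmerge_union {n : ℕ} {S : Finset (Finset ℕ)} (h : IsPartition n S)
    {A B : Finset ℕ} (hA : A ∈ S) (hB : B ∈ S) (hAB : A ≠ B)
    (m : ℕ) (hm : ∀ P ∈ S, m ∉ P) :
    papp m (pmerge S A B) (A ∪ B) = pmerge (papp m S A) (insert m A) B := by
  have h1 : (pmerge S A B).erase (A ∪ B) = (S.erase A).erase B := by
    rw [pmerge, Finset.erase_insert (union_not_mem_erase h hA)]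
  have h2 : (papp m S A).erase (insert m A) = S.erase A := by
    rw [papp, Finset.erase_insert]
    intro hc
    exact hm _ (Finset.mem_of_mem_erase hc) (Finset.mem_insert_self _ _)
  rw [papp, h1, pmerge, h2, Finset.insert_union]

end Aux3
section Aux4
open Finset

/-- The section map: add `n+1` to the part containing `1`. -/
noncomputable def secMap (d : ℤ) (n : ℕ) :
    (↥(SPf d n) → ℚ) →ₗ[ℚ] (↥(SPf d (n+1)) → ℚ) :=
  Matrix.mulVecLin (Matrix.of fun B' B =>
    if B'.val = papp (n+1) B.val (part1 B.val) then (1 : ℚ) else 0)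

lemma mulVecLin_bvec {A A' : Type*} [DecidableEq A] [DecidableEq A']
    {S : Finset A} {S' : Finset A'} (M : ↥S' → ↥S → ℚ)
    {a : A} (ha : a ∈ S) :
    Matrix.mulVecLin (Matrix.of M) (bvec S a) = fun T' => M T' ⟨a, ha⟩ := by
  funext T'
  simp only [Matrix.mulVecLin_apply, Matrix.mulVec, dotProduct, Matrix.of_apply, bvec]
  rw [Finset.sum_eq_single (⟨a, ha⟩ : ↥S)]
  · simp
  · intro b _ hb
    have : ¬ (b.val = a) := fun hh => hb (Subtype.ext hh)
    simp [this]
  · intro hcon; exact absurd (Finset.mem_univ _) hcon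

lemma eq_sum_bvec {A : Type*} [DecidableEq A] {S : Finset A} (x : ↥S → ℚ) :
    x = ∑ B : ↥S, x B • bvec S B.val := by
  funext T
  rw [Finset.sum_apply]
  rw [Finset.sum_eq_single T]
  · simp [bvec]
  · intro b _ hb
    have : ¬ (T.val = b.val) := fun hh => hb (Subtype.ext hh).symm
    simp [bvec, this]
  · intro hcon; exact absurd (Finset.mem_univ _) hcon

lemma piUp_bvec {d : ℤ} {n : ℕ} {C : Finset (Finset ℕ)} (hC : C ∈ SPf d n) :
    piUp d n (bvec (SPf d n) C) = bvec (SPf (d+1) (n+1)) (insert {n+1} C) := by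
  rw [piUp, mulVecLin_bvec _ hC]; rfl

lemma secMap_bvec {d : ℤ} {n : ℕ} {C : Finset (Finset ℕ)} (hC : C ∈ SPf d n) :
    secMap d n (bvec (SPf d n) C) = bvec (SPf d (n+1)) (papp (n+1) C (part1 C)) := by
  rw [secMap, mulVecLin_bvec _ hC]; rfl

lemma piDown_bvec_sing {d : ℤ} {n : ℕ} {B : Finset (Finset ℕ)} (hB : B ∈ SPf d (n+1))
    (hs : ({n+1} : Finset ℕ) ∈ B) :
    piDown d n (bvec (SPf d (n+1)) B) = 0 := by
  rw [piDown, mulVecLin_bvec _ hB]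
  funext B'
  simp [hs]

lemma piDown_bvec {d : ℤ} {n : ℕ} {B : Finset (Finset ℕ)} (hB : B ∈ SPf d (n+1))
    (hs : ({n+1} : Finset ℕ) ∉ B) :
    piDown d n (bvec (SPf d (n+1)) B)
      = bvec (SPf d n) (B.image (fun P => P.erase (n+1))) := by
  rw [piDown, mulVecLin_bvec _ hB]
  funext B'
  simp only [Matrix.of_apply, bvec, hs, not_false_iff, true_and]

end Aux4
section Aux5
open Finset

lemma insert_cancel {a : ℕ} {s t : Finset ℕ} (h : insert a s = insert a t)
    (hs : a ∉ s) (ht : a ∉ t) : s = t := by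
  rw [← Finset.erase_insert hs, h, Finset.erase_insert ht]

lemma not_mem_sup {m : ℕ} {T : Finset (Finset ℕ)} (h : ∀ P ∈ T, m ∉ P) :
    m ∉ T.sup id := by
  intro hc
  obtain ⟨P, hP, hmP⟩ := Finset.mem_sup.mp hc
  exact h P hP hmP

lemma erase_sing_isPartition {n : ℕ} {B : Finset (Finset ℕ)} (h : IsPartition (n+1) B)
    (hs : ({n+1} : Finset ℕ) ∈ B) :
    IsPartition n (B.erase {n+1}) ∧ B = insert {n+1} (B.erase {n+1}) := by
  obtain ⟨hne, hdisj, hsup⟩ := h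
  have htop : ∀ P ∈ B.erase {n+1}, n+1 ∉ P := by
    intro P hP hc
    have hd := hdisj P (Finset.mem_of_mem_erase hP) {n+1} hs (Finset.ne_of_mem_erase hP)
    have : n+1 ∈ P ∩ {n+1} := Finset.mem_inter.mpr ⟨hc, Finset.mem_singleton_self _⟩
    rw [hd] at this; simp at this
  have hBeq : B = insert {n+1} (B.erase {n+1}) := (Finset.insert_erase hs).symm
  refine ⟨⟨?_, ?_, ?_⟩, hBeq⟩
  · exact fun P hP => hne P (Finset.mem_of_mem_erase hP)
  · exact fun P hP Q hQ hPQ => hdisj P (Finset.mem_of_mem_erase hP)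
      Q (Finset.mem_of_mem_erase hQ) hPQ
  · have : B.sup id = insert (n+1) ((B.erase {n+1}).sup id) := by
      conv_lhs => rw [hBeq]
      rw [Finset.sup_insert]
      ext a; simp
    rw [hsup, Icc_succ] at this
    exact (insert_cancel this (by simp [Finset.mem_Icc]) (not_mem_sup htop)).symm

lemma reconstruct {n : ℕ} {B : Finset (Finset ℕ)} (h : IsPartition (n+1) B)
    (hs : ({n+1} : Finset ℕ) ∉ B) :
    ∃ C P₀ : _, IsPartition n C ∧ C.card = B.card ∧ P₀ ∈ C ∧
      B.image (fun P => P.erase (n+1)) = C ∧ B = papp (n+1) C P₀ := by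
  obtain ⟨Q', hQ'B, hQ'top⟩ := exists_part_mem h (a := n+1) (by simp [Finset.mem_Icc])
  obtain ⟨hne, hdisj, hsup⟩ := h
  set P₀ := Q'.erase (n+1) with hP₀def
  set rest := B.erase Q' with hrestdef
  have hQins : Q' = insert (n+1) P₀ := (Finset.insert_erase hQ'top).symm
  have htop : ∀ P ∈ rest, n+1 ∉ P := by
    intro P hP hc
    have hd := hdisj P (Finset.mem_of_mem_erase hP) Q' hQ'B (Finset.ne_of_mem_erase hP)
    have : n+1 ∈ P ∩ Q' := Finset.mem_inter.mpr ⟨hc, hQ'top⟩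
    rw [hd] at this; simp at this
  have hP₀ne : P₀.Nonempty := by
    rcases Finset.eq_empty_or_nonempty P₀ with he | hne'
    · rw [he] at hQins; simp at hQins; exact absurd (hQins ▸ hQ'B) hs
    · exact hne'
  have hP₀nr : P₀ ∉ rest := by
    intro hc
    have hPne : P₀ ≠ Q' := by
      intro hh; rw [hh] at hP₀def
      exact (Finset.notMem_erase (n+1) Q') (hP₀def ▸ hQ'top)
    have hd := hdisj P₀ (Finset.mem_of_mem_erase hc) Q' hQ'B hPne
    obtain ⟨a, ha⟩ := hP₀ne
    have : a ∈ P₀ ∩ Q' := Finset.mem_inter.mpr ⟨ha, Finset.mem_of_mem_erase ha⟩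
    rw [hd] at this; simp at this
  have hBeq : B = insert Q' rest := (Finset.insert_erase hQ'B).symm
  have htopP₀ : n+1 ∉ P₀ := Finset.notMem_erase _ _
  refine ⟨insert P₀ rest, P₀, ⟨?_, ?_, ?_⟩, ?_, Finset.mem_insert_self _ _, ?_, ?_⟩
  · intro P hP
    rcases Finset.mem_insert.mp hP with rfl | hP
    · exact hP₀ne
    · exact hne P (Finset.mem_of_mem_erase hP)
  · intro P hP Q hQ hPQ
    have key : ∀ R ∈ rest, P₀ ∩ R = ∅ := by
      intro R hR
      have hd := hdisj Q' hQ'B R (Finset.mem_of_mem_erase hR)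
        (fun hh => (Finset.ne_of_mem_erase hR) hh.symm)
      have : P₀ ∩ R ⊆ Q' ∩ R :=
        Finset.inter_subset_inter (Finset.erase_subset _ _) (Finset.Subset.refl _)
      rw [hd] at this
      exact Finset.subset_empty.mp this
    rcases Finset.mem_insert.mp hP with rfl | hP <;>
      rcases Finset.mem_insert.mp hQ with rfl | hQ
    · exact absurd rfl hPQ
    · exact key Q hQ
    · rw [Finset.inter_comm]; exact key P hP
    · exact hdisj P (Finset.mem_of_mem_erase hP) Q (Finset.mem_of_mem_erase hQ) hPQ
  · have hsupB : B.sup id = insert (n+1) ((insert P₀ rest).sup id) := by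
      conv_lhs => rw [hBeq]
      rw [Finset.sup_insert, Finset.sup_insert]
      simp only [id, Finset.sup_eq_union]
      rw [hQins, Finset.insert_union]
    rw [hsup, Icc_succ] at hsupB
    refine (insert_cancel hsupB (by simp [Finset.mem_Icc]) ?_).symm
    refine not_mem_sup ?_
    intro P hP
    rcases Finset.mem_insert.mp hP with rfl | hP
    · exact htopP₀
    · exact htop P hP
  · rw [Finset.card_insert_of_notMem hP₀nr, hrestdef, Finset.card_erase_of_mem hQ'B]
    have : 1 ≤ B.card := Finset.card_pos.mpr ⟨Q', hQ'B⟩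
    omega
  · conv_lhs => rw [hBeq]
    rw [Finset.image_insert]
    congr 1
    calc rest.image (fun P => P.erase (n+1)) = rest.image id := by
          apply Finset.image_congr
          intro P hP
          exact Finset.erase_eq_of_notMem (htop P hP)
      _ = rest := Finset.image_id
  · rw [papp, Finset.erase_insert hP₀nr, ← hQins, hBeq]

end Aux5
section Aux6
open Finset

lemma insert_sing_isPartition {n : ℕ} {C : Finset (Finset ℕ)} (h : IsPartition n C) :
    IsPartition (n+1) (insert {n+1} C) := by
  obtain ⟨hne, hdisj, hsup⟩ := h
  have htop : ∀ P ∈ C, n+1 ∉ P := fun P hP => part_not_mem_top ⟨hne, hdisj, hsup⟩ hP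
  refine ⟨?_, ?_, ?_⟩
  · intro P hP
    rcases Finset.mem_insert.mp hP with rfl | hP
    · exact ⟨n+1, Finset.mem_singleton_self _⟩
    · exact hne P hP
  · intro P hP Q hQ hPQ
    have key : ∀ R ∈ C, ({n+1} : Finset ℕ) ∩ R = ∅ := by
      intro R hR
      rw [Finset.eq_empty_iff_forall_notMem]
      intro a ha
      rw [Finset.mem_inter, Finset.mem_singleton] at ha
      exact htop R hR (ha.1 ▸ ha.2)
    rcases Finset.mem_insert.mp hP with rfl | hP <;>
      rcases Finset.mem_insert.mp hQ with rfl | hQ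
    · exact absurd rfl hPQ
    · exact key Q hQ
    · rw [Finset.inter_comm]; exact key P hP
    · exact hdisj P hP Q hQ hPQ
  · rw [Finset.sup_insert]
    simp only [id]
    rw [hsup]
    ext a; simp [Finset.mem_Icc]; omega

lemma sing_not_mem {n : ℕ} {C : Finset (Finset ℕ)} (h : IsPartition n C) :
    ({n+1} : Finset ℕ) ∉ C :=
  fun hc => part_not_mem_top h hc (Finset.mem_singleton_self _)

lemma sing_union (n : ℕ) (P : Finset ℕ) : ({n+1} : Finset ℕ) ∪ P = insert (n+1) P := by
  ext a; simp [Finset.mem_insert]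

lemma claimA (n : ℕ) (d : ℤ) (hd1 : 1 ≤ d) (hn : 1 ≤ n)
    {B : Finset (Finset ℕ)} (hB : B ∈ SPf (d+1) (n+1)) :
    bvec (SPf (d+1) (n+1)) B
      - secMap (d+1) n (piDown (d+1) n (bvec (SPf (d+1) (n+1)) B))
      ∈ LinearMap.range (piUp d n) ⊔ Rsub (d+1) (n+1) := by
  obtain ⟨hPart, hcard⟩ := SPf_spec hB
  by_cases hs : ({n+1} : Finset ℕ) ∈ B
  · rw [piDown_bvec_sing hB hs, map_zero, sub_zero]
    apply Submodule.mem_sup_left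
    obtain ⟨hCpart, hBeq⟩ := erase_sing_isPartition hPart hs
    have hCcard : ((B.erase {n+1}).card : ℤ) = d + 3 := by
      rw [Finset.card_erase_of_mem hs]
      have : 1 ≤ B.card := Finset.card_pos.mpr ⟨_, hs⟩
      push_cast; omega
    have hC : B.erase {n+1} ∈ SPf d n := mem_SPf hCpart hCcard
    exact ⟨bvec (SPf d n) (B.erase {n+1}), by rw [piUp_bvec hC, ← hBeq]⟩
  · rw [piDown_bvec hB hs]
    obtain ⟨C, P₀, hCpart, hCcard, hP₀C, himg, hBeq⟩ := reconstruct hPart hs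
    rw [himg]
    have hCcard' : (C.card : ℤ) = (d+1) + 3 := by rw [hCcard]; exact hcard
    have hCmem : C ∈ SPf (d+1) n := mem_SPf hCpart hCcard'
    rw [secMap_bvec hCmem]
    obtain ⟨Q, hQC, h1Q⟩ := exists_part_one hCpart hn
    have hpart1 : part1 C = Q := part1_eq hCpart.2.1 hQC h1Q
    rw [hpart1]
    by_cases hPQ : P₀ = Q
    · rw [hBeq, hPQ, sub_self]
      exact Submodule.zero_mem _
    · -- build a relation
      have htopC : ∀ P ∈ C, n+1 ∉ P := fun P hP => part_not_mem_top hCpart hP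
      have hsingC : ({n+1} : Finset ℕ) ∉ C := sing_not_mem hCpart
      set S' : Finset (Finset ℕ) := insert {n+1} C with hS'def
      have hS'part : IsPartition (n+1) S' := insert_sing_isPartition hCpart
      have hS'card : (S'.card : ℤ) = (d+1) + 4 := by
        rw [hS'def, Finset.card_insert_of_notMem hsingC]
        push_cast; omega
      -- find a fourth part
      have h5 : 5 ≤ C.card := by omega
      have hc1 : (C.erase P₀).card + 1 = C.card := by
        rw [Finset.card_erase_of_mem hP₀C]; omega
      have hQmem' : Q ∈ C.erase P₀ :=
        Finset.mem_erase.mpr ⟨fun hh => hPQ hh.symm, hQC⟩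
      have hc3 : ((C.erase P₀).erase Q).card + 1 = (C.erase P₀).card := by
        rw [Finset.card_erase_of_mem hQmem']; omega
      have hbig : 0 < ((C.erase P₀).erase Q).card := by omega
      obtain ⟨P4, hP4⟩ := Finset.card_pos.mp hbig
      have hP4Q : P4 ≠ Q := Finset.ne_of_mem_erase hP4
      have hP4P₀ : P4 ≠ P₀ := Finset.ne_of_mem_erase (Finset.mem_of_mem_erase hP4)
      have hP4C : P4 ∈ C := Finset.mem_of_mem_erase (Finset.mem_of_mem_erase hP4)
      have hsingne : ∀ P ∈ C, ({n+1} : Finset ℕ) ≠ P :=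
        fun P hP hc => htopC P hP (hc ▸ Finset.mem_singleton_self _)
      -- the four partitions
      have hSe : S'.erase {n+1} = C := Finset.erase_insert hsingC
      have e1 : insert (({n+1} : Finset ℕ) ∪ P₀) ((S'.erase {n+1}).erase P₀)
          = papp (n+1) C P₀ := by rw [hSe, sing_union, papp]
      have e3 : insert (({n+1} : Finset ℕ) ∪ Q) ((S'.erase {n+1}).erase Q)
          = papp (n+1) C Q := by rw [hSe, sing_union, papp]
      have he2a : S'.erase Q = insert {n+1} (C.erase Q) :=
        Finset.erase_insert_of_ne (hsingne Q hQC)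
      have he4a : S'.erase P₀ = insert {n+1} (C.erase P₀) :=
        Finset.erase_insert_of_ne (hsingne P₀ hP₀C)
      have e2 : insert (Q ∪ P4) ((S'.erase Q).erase P4)
          = insert {n+1} (pmerge C Q P4) := by
        rw [he2a, Finset.erase_insert_of_ne (hsingne P4 hP4C), pmerge, Finset.insert_comm]
      have e4 : insert (P₀ ∪ P4) ((S'.erase P₀).erase P4)
          = insert {n+1} (pmerge C P₀ P4) := by
        rw [he4a, Finset.erase_insert_of_ne (hsingne P4 hP4C), pmerge, Finset.insert_comm]
      -- the relation element
      set v : ↥(SPf (d+1) (n+1)) → ℚ :=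
        bvec (SPf (d+1) (n+1)) (insert (({n+1} : Finset ℕ) ∪ P₀) ((S'.erase {n+1}).erase P₀))
        + bvec (SPf (d+1) (n+1)) (insert (Q ∪ P4) ((S'.erase Q).erase P4))
        - bvec (SPf (d+1) (n+1)) (insert (({n+1} : Finset ℕ) ∪ Q) ((S'.erase {n+1}).erase Q))
        - bvec (SPf (d+1) (n+1)) (insert (P₀ ∪ P4) ((S'.erase P₀).erase P4)) with hvdef
      have hv : v ∈ Rsub (d+1) (n+1) := by
        apply Submodule.subset_span
        exact ⟨S', {n+1}, P₀, Q, P4, hS'part, hS'card,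
          Finset.mem_insert_self _ _,
          Finset.mem_insert_of_mem hP₀C, Finset.mem_insert_of_mem hQC,
          Finset.mem_insert_of_mem hP4C,
          hsingne P₀ hP₀C, hsingne Q hQC, hsingne P4 hP4C,
          hPQ, fun hh => hP4P₀ hh.symm, fun hh => hP4Q hh.symm, hvdef⟩
      -- the two piUp images
      have hm2 : pmerge C Q P4 ∈ SPf d n := by
        apply mem_SPf (pmerge_isPartition hCpart hQC hP4C (fun hh => hP4Q hh.symm))
        have := pmerge_card hCpart hQC hP4C (fun hh => hP4Q hh.symm)
        push_cast at hCcard' ⊢; omega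
      have hm4 : pmerge C P₀ P4 ∈ SPf d n := by
        apply mem_SPf (pmerge_isPartition hCpart hP₀C hP4C (fun hh => hP4P₀ hh.symm))
        have := pmerge_card hCpart hP₀C hP4C (fun hh => hP4P₀ hh.symm)
        push_cast at hCcard' ⊢; omega
      have hr2 : bvec (SPf (d+1) (n+1)) (insert {n+1} (pmerge C Q P4))
          ∈ LinearMap.range (piUp d n) :=
        ⟨bvec (SPf d n) (pmerge C Q P4), (piUp_bvec hm2)⟩
      have hr4 : bvec (SPf (d+1) (n+1)) (insert {n+1} (pmerge C P₀ P4))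
          ∈ LinearMap.range (piUp d n) :=
        ⟨bvec (SPf d n) (pmerge C P₀ P4), (piUp_bvec hm4)⟩
      have hkey : bvec (SPf (d+1) (n+1)) B - bvec (SPf (d+1) (n+1)) (papp (n+1) C Q)
          = v - bvec (SPf (d+1) (n+1)) (insert {n+1} (pmerge C Q P4))
            + bvec (SPf (d+1) (n+1)) (insert {n+1} (pmerge C P₀ P4)) := by
        rw [hvdef, e1, e2, e3, e4, ← hBeq]
        abel
      rw [hkey]
      exact add_mem (sub_mem (Submodule.mem_sup_right hv) (Submodule.mem_sup_left hr2))
        (Submodule.mem_sup_left hr4)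

end Aux6
section Aux7
open Finset

lemma secMap_Rsub (d : ℤ) (n : ℕ) (hn : 1 ≤ n) :
    Rsub d n ≤ (Rsub d (n+1)).comap (secMap d n) := by
  rw [Rsub]
  apply Submodule.span_le.mpr
  rintro v ⟨S, P1, P2, P3, P4, hS, hSc, h1, h2, h3, h4,
    h12, h13, h14, h23, h24, h34, rfl⟩
  rw [SetLike.mem_coe, Submodule.mem_comap]
  have htop : ∀ P ∈ S, n+1 ∉ P := fun P hP => part_not_mem_top hS hP
  have hM12 : pmerge S P1 P2 ∈ SPf d n := by
    refine mem_SPf (pmerge_isPartition hS h1 h2 h12) ?_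
    have h := pmerge_card hS h1 h2 h12; omega
  have hM34 : pmerge S P3 P4 ∈ SPf d n := by
    refine mem_SPf (pmerge_isPartition hS h3 h4 h34) ?_
    have h := pmerge_card hS h3 h4 h34; omega
  have hM13 : pmerge S P1 P3 ∈ SPf d n := by
    refine mem_SPf (pmerge_isPartition hS h1 h3 h13) ?_
    have h := pmerge_card hS h1 h3 h13; omega
  have hM24 : pmerge S P2 P4 ∈ SPf d n := by
    refine mem_SPf (pmerge_isPartition hS h2 h4 h24) ?_
    have h := pmerge_card hS h2 h4 h24; omega
  obtain ⟨Q₁, hQ₁S, h1Q₁⟩ := exists_part_one hS hn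
  have hmemS' : ∀ Qb, Qb ∈ S → ∀ P, P ∈ S → P ≠ Qb → P ∈ papp (n+1) S Qb :=
    fun Qb _ P hP hne => Finset.mem_insert_of_mem (Finset.mem_erase.mpr ⟨hne, hP⟩)
  have hQbne : ∀ Qb P, P ∈ S → insert (n+1) Qb ≠ P :=
    fun Qb P hP hc => htop P hP (hc ▸ Finset.mem_insert_self _ _)
  have hS'p : ∀ Qb, Qb ∈ S → IsPartition (n+1) (papp (n+1) S Qb) :=
    fun Qb h => papp_isPartition hS h
  have hS'c : ∀ Qb, Qb ∈ S → ((papp (n+1) S Qb).card : ℤ) = d + 4 :=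
    fun Qb h => by rw [papp_card hS h]; exact hSc
  have hp_other : ∀ A B, A ∈ S → B ∈ S → A ≠ B → Q₁ ≠ A → Q₁ ≠ B →
      part1 (pmerge S A B) = Q₁ := by
    intro A B hA hB hAB hQA hQB
    refine part1_eq (pmerge_isPartition hS hA hB hAB).2.1 ?_ h1Q₁
    exact Finset.mem_insert_of_mem
      (Finset.mem_erase.mpr ⟨hQB, Finset.mem_erase.mpr ⟨hQA, hQ₁S⟩⟩)
  have hp_left : ∀ A B, A ∈ S → B ∈ S → A ≠ B → 1 ∈ A →
      part1 (pmerge S A B) = A ∪ B := fun A B hA hB hAB h1A =>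
    part1_eq (pmerge_isPartition hS hA hB hAB).2.1 (Finset.mem_insert_self _ _)
      (Finset.mem_union_left _ h1A)
  have hp_right : ∀ A B, A ∈ S → B ∈ S → A ≠ B → 1 ∈ B →
      part1 (pmerge S A B) = A ∪ B := fun A B hA hB hAB h1B =>
    part1_eq (pmerge_isPartition hS hA hB hAB).2.1 (Finset.mem_insert_self _ _)
      (Finset.mem_union_right _ h1B)
  rw [show insert (P1 ∪ P2) ((S.erase P1).erase P2) = pmerge S P1 P2 from rfl,
      show insert (P3 ∪ P4) ((S.erase P3).erase P4) = pmerge S P3 P4 from rfl,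
      show insert (P1 ∪ P3) ((S.erase P1).erase P3) = pmerge S P1 P3 from rfl,
      show insert (P2 ∪ P4) ((S.erase P2).erase P4) = pmerge S P2 P4 from rfl]
  simp only [map_add, map_sub]
  rw [secMap_bvec hM12, secMap_bvec hM34, secMap_bvec hM13, secMap_bvec hM24]
  by_cases hc1 : Q₁ = P1
  · rw [hc1] at h1Q₁ hp_other
    rw [hp_left P1 P2 h1 h2 h12 h1Q₁, hp_other P3 P4 h3 h4 h34 h13 h14,
        hp_left P1 P3 h1 h3 h13 h1Q₁, hp_other P2 P4 h2 h4 h24 h12 h14]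
    rw [papp_pmerge_union hS h1 h2 h12 (n+1) htop,
        papp_pmerge hS h3 h4 h1 h13 h14 (n+1) htop,
        papp_pmerge_union hS h1 h3 h13 (n+1) htop,
        papp_pmerge hS h2 h4 h1 h12 h14 (n+1) htop]
    apply Submodule.subset_span
    exact ⟨papp (n+1) S P1, insert (n+1) P1, P2, P3, P4, hS'p P1 h1, hS'c P1 h1,
      Finset.mem_insert_self _ _,
      hmemS' P1 h1 P2 h2 (fun hh => h12 hh.symm),
      hmemS' P1 h1 P3 h3 (fun hh => h13 hh.symm),
      hmemS' P1 h1 P4 h4 (fun hh => h14 hh.symm),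
      hQbne P1 P2 h2, hQbne P1 P3 h3, hQbne P1 P4 h4, h23, h24, h34, rfl⟩
  by_cases hc2 : Q₁ = P2
  · rw [hc2] at h1Q₁ hp_other
    rw [hp_right P1 P2 h1 h2 h12 h1Q₁, hp_other P3 P4 h3 h4 h34 h23 h24,
        hp_other P1 P3 h1 h3 h13 (fun hh => h12 hh.symm) h23,
        hp_left P2 P4 h2 h4 h24 h1Q₁]
    rw [pmerge_comm S P1 P2, Finset.union_comm P1 P2,
        papp_pmerge_union hS h2 h1 (fun hh => h12 hh.symm) (n+1) htop,
        papp_pmerge hS h3 h4 h2 h23 h24 (n+1) htop,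
        papp_pmerge hS h1 h3 h2 (fun hh => h12 hh.symm) h23 (n+1) htop,
        papp_pmerge_union hS h2 h4 h24 (n+1) htop,
        pmerge_comm (papp (n+1) S P2) (insert (n+1) P2) P1]
    apply Submodule.subset_span
    exact ⟨papp (n+1) S P2, P1, insert (n+1) P2, P3, P4, hS'p P2 h2, hS'c P2 h2,
      hmemS' P2 h2 P1 h1 h12, Finset.mem_insert_self _ _,
      hmemS' P2 h2 P3 h3 (fun hh => h23 hh.symm),
      hmemS' P2 h2 P4 h4 (fun hh => h24 hh.symm),
      fun hh => hQbne P2 P1 h1 hh.symm, h13, h14,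
      hQbne P2 P3 h3, hQbne P2 P4 h4, h34, rfl⟩
  by_cases hc3 : Q₁ = P3
  · rw [hc3] at h1Q₁ hp_other
    rw [hp_other P1 P2 h1 h2 h12 (fun hh => h13 hh.symm) (fun hh => h23 hh.symm),
        hp_left P3 P4 h3 h4 h34 h1Q₁,
        hp_right P1 P3 h1 h3 h13 h1Q₁,
        hp_other P2 P4 h2 h4 h24 (fun hh => h23 hh.symm) h34]
    rw [papp_pmerge hS h1 h2 h3 (fun hh => h13 hh.symm) (fun hh => h23 hh.symm) (n+1) htop,
        papp_pmerge_union hS h3 h4 h34 (n+1) htop,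
        pmerge_comm S P1 P3, Finset.union_comm P1 P3,
        papp_pmerge_union hS h3 h1 (fun hh => h13 hh.symm) (n+1) htop,
        papp_pmerge hS h2 h4 h3 (fun hh => h23 hh.symm) h34 (n+1) htop,
        pmerge_comm (papp (n+1) S P3) (insert (n+1) P3) P1]
    apply Submodule.subset_span
    exact ⟨papp (n+1) S P3, P1, P2, insert (n+1) P3, P4, hS'p P3 h3, hS'c P3 h3,
      hmemS' P3 h3 P1 h1 h13, hmemS' P3 h3 P2 h2 h23,
      Finset.mem_insert_self _ _,
      hmemS' P3 h3 P4 h4 (fun hh => h34 hh.symm),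
      h12, fun hh => hQbne P3 P1 h1 hh.symm, h14,
      fun hh => hQbne P3 P2 h2 hh.symm, h24, hQbne P3 P4 h4, rfl⟩
  by_cases hc4 : Q₁ = P4
  · rw [hc4] at h1Q₁ hp_other
    rw [hp_other P1 P2 h1 h2 h12 (fun hh => h14 hh.symm) (fun hh => h24 hh.symm),
        hp_right P3 P4 h3 h4 h34 h1Q₁,
        hp_other P1 P3 h1 h3 h13 (fun hh => h14 hh.symm) (fun hh => h34 hh.symm),
        hp_right P2 P4 h2 h4 h24 h1Q₁]
    rw [papp_pmerge hS h1 h2 h4 (fun hh => h14 hh.symm) (fun hh => h24 hh.symm) (n+1) htop,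
        pmerge_comm S P3 P4, Finset.union_comm P3 P4,
        papp_pmerge_union hS h4 h3 (fun hh => h34 hh.symm) (n+1) htop,
        papp_pmerge hS h1 h3 h4 (fun hh => h14 hh.symm) (fun hh => h34 hh.symm) (n+1) htop,
        pmerge_comm S P2 P4, Finset.union_comm P2 P4,
        papp_pmerge_union hS h4 h2 (fun hh => h24 hh.symm) (n+1) htop,
        pmerge_comm (papp (n+1) S P4) (insert (n+1) P4) P3,
        pmerge_comm (papp (n+1) S P4) (insert (n+1) P4) P2]
    apply Submodule.subset_span
    exact ⟨papp (n+1) S P4, P1, P2, P3, insert (n+1) P4, hS'p P4 h4, hS'c P4 h4,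
      hmemS' P4 h4 P1 h1 h14, hmemS' P4 h4 P2 h2 h24, hmemS' P4 h4 P3 h3 h34,
      Finset.mem_insert_self _ _,
      h12, h13, fun hh => hQbne P4 P1 h1 hh.symm,
      h23, fun hh => hQbne P4 P2 h2 hh.symm, fun hh => hQbne P4 P3 h3 hh.symm, rfl⟩
  · rw [hp_other P1 P2 h1 h2 h12 hc1 hc2, hp_other P3 P4 h3 h4 h34 hc3 hc4,
        hp_other P1 P3 h1 h3 h13 hc1 hc3, hp_other P2 P4 h2 h4 h24 hc2 hc4]
    rw [papp_pmerge hS h1 h2 hQ₁S hc1 hc2 (n+1) htop,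
        papp_pmerge hS h3 h4 hQ₁S hc3 hc4 (n+1) htop,
        papp_pmerge hS h1 h3 hQ₁S hc1 hc3 (n+1) htop,
        papp_pmerge hS h2 h4 hQ₁S hc2 hc4 (n+1) htop]
    apply Submodule.subset_span
    exact ⟨papp (n+1) S Q₁, P1, P2, P3, P4, hS'p Q₁ hQ₁S, hS'c Q₁ hQ₁S,
      hmemS' Q₁ hQ₁S P1 h1 (fun hh => hc1 hh.symm),
      hmemS' Q₁ hQ₁S P2 h2 (fun hh => hc2 hh.symm),
      hmemS' Q₁ hQ₁S P3 h3 (fun hh => hc3 hh.symm),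
      hmemS' Q₁ hQ₁S P4 h4 (fun hh => hc4 hh.symm),
      h12, h13, h14, h23, h24, h34, rfl⟩

end Aux7
/-- For `n ≥ 4` and `1 ≤ d ≤ n−3`: `π̃_* ∘ π̃^* = 0`, and any
`x ∈ ℚSP_{d+1,n+1}` with `π̃_*(x) ∈ R_{d+1,n}` lies in `im(π̃^*) + R_{d+1,n+1}`;
i.e. the induced sequence of quotients is exact at the middle term. -/
theorem statement7 (n : ℕ) (d : ℤ) (hn : 4 ≤ n) (hd1 : 1 ≤ d) (hd2 : d ≤ (n : ℤ) - 3) :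
    (piDown (d+1) n).comp (piUp d n) = 0 ∧
    ∀ x : ↥(SPf (d+1) (n+1)) → ℚ, piDown (d+1) n x ∈ Rsub (d+1) n →
      x ∈ LinearMap.range (piUp d n) ⊔ Rsub (d+1) (n+1) := by
  constructor
  · -- π̃_* ∘ π̃^* = 0
    rw [piDown, piUp, ← Matrix.mulVecLin_mul]
    have hzero : (Matrix.of fun (B' : ↥(SPf (d+1) n)) (B : ↥(SPf (d+1) (n+1))) =>
        if ({n+1} : Finset ℕ) ∉ B.val ∧
          B'.val = B.val.image (fun P => P.erase (n+1)) then (1:ℚ) else 0)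
        * (Matrix.of fun (B' : ↥(SPf (d+1) (n+1))) (B : ↥(SPf d n)) =>
        if B'.val = insert {n+1} B.val then (1:ℚ) else 0) = 0 := by
      ext i j
      rw [Matrix.mul_apply]
      apply Finset.sum_eq_zero
      intro k _
      simp only [Matrix.of_apply, Matrix.zero_apply]
      by_cases h2 : k.val = insert {n+1} j.val
      · have : ({n+1} : Finset ℕ) ∈ k.val := h2 ▸ Finset.mem_insert_self _ _
        simp [this]
      · simp [h2]
    rw [hzero, Matrix.mulVecLin_zero]
  · intro x hx
    have hn1 : 1 ≤ n := by omega
    have h2 : secMap (d+1) n (piDown (d+1) n x) ∈ Rsub (d+1) (n+1) := by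
      have h := secMap_Rsub (d+1) n hn1 hx
      rwa [Submodule.mem_comap] at h
    have key : ∑ B : ↥(SPf (d+1) (n+1)), x B •
          (bvec (SPf (d+1) (n+1)) B.val
            - secMap (d+1) n (piDown (d+1) n (bvec (SPf (d+1) (n+1)) B.val)))
        = x - secMap (d+1) n (piDown (d+1) n x) := by
      calc ∑ B : ↥(SPf (d+1) (n+1)), x B •
            (bvec (SPf (d+1) (n+1)) B.val
              - secMap (d+1) n (piDown (d+1) n (bvec (SPf (d+1) (n+1)) B.val)))
          = (∑ B : ↥(SPf (d+1) (n+1)), x B • bvec (SPf (d+1) (n+1)) B.val)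
            - ∑ B : ↥(SPf (d+1) (n+1)), x B •
              secMap (d+1) n (piDown (d+1) n (bvec (SPf (d+1) (n+1)) B.val)) := by
            simp only [smul_sub]
            rw [Finset.sum_sub_distrib]
        _ = (∑ B : ↥(SPf (d+1) (n+1)), x B • bvec (SPf (d+1) (n+1)) B.val)
            - secMap (d+1) n (piDown (d+1) n
              (∑ B : ↥(SPf (d+1) (n+1)), x B • bvec (SPf (d+1) (n+1)) B.val)) := by
            rw [map_sum, map_sum]
            simp only [map_smul]
        _ = x - secMap (d+1) n (piDown (d+1) n x) := by rw [← eq_sum_bvec x]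
    have h1 : x - secMap (d+1) n (piDown (d+1) n x)
        ∈ LinearMap.range (piUp d n) ⊔ Rsub (d+1) (n+1) := by
      rw [← key]
      apply Submodule.sum_mem
      intro B _
      exact Submodule.smul_mem _ _ (claimA n d hd1 hn1 B.2)
    have := add_mem h1 (Submodule.mem_sup_right h2 :
      secMap (d+1) n (piDown (d+1) n x)
        ∈ LinearMap.range (piUp d n) ⊔ Rsub (d+1) (n+1))
    simpa using this
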